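/- Let L₂ be the 3-dimensional complex ω-Lie algebra with basis {x,y,z}, brackets [x,y]=0, [x,z]=y, [y,z]=z, and ω(x,z)=1, ω(x,y)=ω(y,z)=0. Then a linear map f on L₂ is a quasiderivation of L₂ if and only if its matrix in the basis {x,y,z} has third row (0, 0, x₃₃), i.e., the (3,1) and (3,2) entries vanish. In particular, QDer(L₂) is a 7-dimensional subspace of gl(L₂). -/

import Mathlib

/-- Bracket of the ω-Lie algebra `L₂`: basis `x = e 0, y = e 1, z = e 2`,
`[x,y] = 0`, `[x,z] = y`, `[y,z] = z`, extended bilinearly. -/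
def br2 (u v : Fin 3 → ℂ) : Fin 3 → ℂ :=
  ![0, u 0 * v 2 - u 2 * v 0, u 1 * v 2 - u 2 * v 1]

/-- The form ω of `L₂`: `ω(x,z) = 1`, `ω(x,y) = ω(y,z) = 0`, skew-symmetric bilinear. -/
def om2 (u v : Fin 3 → ℂ) : ℂ := u 0 * v 2 - u 2 * v 0

/-- `f` (as a matrix in the basis `x,y,z`) is a quasiderivation of `L₂`. -/
def IsQDer2 (f : Matrix (Fin 3) (Fin 3) ℂ) : Prop :=
  ∃ f' : Matrix (Fin 3) (Fin 3) ℂ, ∀ u v : Fin 3 → ℂ,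
    br2 (f.mulVec u) v + br2 u (f.mulVec v) = f'.mulVec (br2 u v)

lemma qder_iff (f : Matrix (Fin 3) (Fin 3) ℂ) : IsQDer2 f ↔ (f 2 0 = 0 ∧ f 2 1 = 0) := by
  constructor
  · rintro ⟨f', hf'⟩
    have h := hf' ![1,0,0] ![0,1,0]
    have h1 := congrFun h 1
    have h2 := congrFun h 2
    simp [br2, Matrix.mulVec, dotProduct, Fin.sum_univ_succ] at h1 h2
    exact ⟨h2, h1⟩
  · rintro ⟨h1, h2⟩
    refine ⟨!![0,0,0; 0, f 0 0 + f 2 2, f 0 1; 0, f 1 0, f 1 1 + f 2 2], fun u v => ?_⟩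
    funext i
    fin_cases i <;>
      simp [br2, Matrix.mulVec, dotProduct, Fin.sum_univ_succ, h1, h2] <;> ring

/-- Projection onto the (2,0) and (2,1) entries. -/
noncomputable def phi : Matrix (Fin 3) (Fin 3) ℂ →ₗ[ℂ] ℂ × ℂ where
  toFun f := (f 2 0, f 2 1)
  map_add' _ _ := rfl
  map_smul' _ _ := rfl

theorem stmt16 :
    (∀ f : Matrix (Fin 3) (Fin 3) ℂ, IsQDer2 f ↔ (f 2 0 = 0 ∧ f 2 1 = 0)) ∧
    (∃ S : Submodule ℂ (Matrix (Fin 3) (Fin 3) ℂ),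
      (S : Set (Matrix (Fin 3) (Fin 3) ℂ)) = {f | IsQDer2 f} ∧ Module.finrank ℂ S = 7) := by
  refine ⟨qder_iff, LinearMap.ker phi, ?_, ?_⟩
  · ext f
    simp [phi, qder_iff, LinearMap.mem_ker, Prod.ext_iff]
    exact Iff.rfl
  · have hsurj : Function.Surjective phi := by
      rintro ⟨a, b⟩
      exact ⟨!![0,0,0;0,0,0;a,b,0], rfl⟩
    have h := LinearMap.finrank_range_add_finrank_ker phi
    rw [LinearMap.range_eq_top.mpr hsurj, finrank_top] at h
    have hd : Module.finrank ℂ (Matrix (Fin 3) (Fin 3) ℂ) = 9 := by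
      simp [Module.finrank_matrix]
    have hp : Module.finrank ℂ (ℂ × ℂ) = 2 := by simp
    omega
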